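/- Let H be a nonnegative self-adjoint operator on a Hilbert space and λ ≥ 0. If there exists a sequence ψₙ in the domain of H with ‖ψₙ‖ = 1 such that ⟨(H+1)^{-1}ψₙ, (H−λ)ψₙ⟩ → 0 and ⟨ψₙ, (H−λ)ψₙ⟩ → 0, then λ ∈ σ(H). -/

import Mathlib

open Filter Topology

/-- Weyl criterion with the resolvent `(H+1)⁻¹` (the case `f(x) = (x+1)⁻¹` of
the generalized criterion): if there is a sequence of unit vectors `ψₙ` with
`⟨(H+1)⁻¹ψₙ, (H−λ)ψₙ⟩ → 0` and `⟨ψₙ, (H−λ)ψₙ⟩ → 0`, then `λ ∈ σ(H)`. -/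
theorem weyl_resolvent_criterion
    {ℋ : Type*} [NormedAddCommGroup ℋ] [InnerProductSpace ℂ ℋ] [CompleteSpace ℋ]
    (H : ℋ →L[ℂ] ℋ) (hH : IsSelfAdjoint H) (hHpos : H.IsPositive)
    (lam : ℝ) (hlam_nonneg : 0 ≤ lam)
    (ψ : ℕ → ℋ) (hψ : ∀ n, ‖ψ n‖ = 1)
    (h1 : Tendsto (fun n =>
        (inner ℂ ((cfc (fun x : ℝ => (x + 1)⁻¹) H) (ψ n))
          ((H - (lam : ℂ) • 1) (ψ n)) : ℂ)) atTop (nhds 0))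
    (h2 : Tendsto (fun n => (inner ℂ (ψ n) ((H - (lam : ℂ) • 1) (ψ n)) : ℂ))
        atTop (nhds 0)) :
    (lam : ℂ) ∈ spectrum ℂ H := by
  classical
  set T : ℋ →L[ℂ] ℋ := H - (lam : ℂ) • 1 with hT
  -- spectrum of H is nonneg
  have hnn : (0 : ℋ →L[ℂ] ℋ) ≤ H := (ContinuousLinearMap.nonneg_iff_isPositive H).mpr hHpos
  have hspec : ∀ x ∈ spectrum ℝ H, (0:ℝ) ≤ x := fun x hx =>
    spectrum_nonneg_of_nonneg hnn hx
  have hpos1 : ∀ x ∈ spectrum ℝ H, (0:ℝ) < x + 1 := fun x hx => by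
    have := hspec x hx; linarith
  -- continuity facts
  have hcr : ContinuousOn (fun x : ℝ => (x + 1)⁻¹) (spectrum ℝ H) :=
    ContinuousOn.inv₀ (by fun_prop) (fun x hx => ne_of_gt (hpos1 x hx))
  have hcd : ContinuousOn (fun x : ℝ => 1 - (lam + 1) * (x + 1)⁻¹) (spectrum ℝ H) := by
    exact (continuousOn_const).sub (continuousOn_const.mul hcr)
  have hct : ContinuousOn (fun x : ℝ => x - lam) (spectrum ℝ H) := by fun_prop
  have hcs : ContinuousOn (fun x : ℝ => Real.sqrt (x + 1)) (spectrum ℝ H) := by fun_prop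
  have hcb : ContinuousOn (fun x : ℝ => (x - lam) * (Real.sqrt (x + 1))⁻¹) (spectrum ℝ H) := by
    refine hct.mul (ContinuousOn.inv₀ hcs fun x hx => ?_)
    exact ne_of_gt (Real.sqrt_pos.mpr (hpos1 x hx))
  set R : ℋ →L[ℂ] ℋ := cfc (fun x : ℝ => (x + 1)⁻¹) H with hR
  set B : ℋ →L[ℂ] ℋ := cfc (fun x : ℝ => (x - lam) * (Real.sqrt (x + 1))⁻¹) H with hB
  set C : ℋ →L[ℂ] ℋ := cfc (fun x : ℝ => Real.sqrt (x + 1)) H with hC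
  set D : ℋ →L[ℂ] ℋ := cfc (fun x : ℝ => 1 - (lam + 1) * (x + 1)⁻¹) H with hD
  -- T as cfc
  have hTc : T = cfc (fun x : ℝ => x - lam) H := by
    rw [cfc_sub _ _ H (by fun_prop) (by fun_prop), cfc_id' ℝ H, cfc_const lam H,
      Algebra.algebraMap_eq_smul_one, hT, Complex.coe_smul]
  -- D as 1 - (lam+1) • R
  have hDc : D = 1 - (lam + 1) • R := by
    rw [hD]
    have : (fun x : ℝ => 1 - (lam + 1) * (x + 1)⁻¹)
        = fun x : ℝ => (1 : ℝ → ℝ) x - (lam + 1) * (x + 1)⁻¹ := by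
      ext x; simp
    rw [this, cfc_sub (1 : ℝ → ℝ) (fun x : ℝ => (lam + 1) * (x + 1)⁻¹) H (by fun_prop) (continuousOn_const.mul hcr), cfc_one ℝ H]
    congr 1
    exact cfc_const_mul (lam + 1) (fun x : ℝ => (x + 1)⁻¹) H hcr
  -- D * T = B * B
  have hDT : D * T = B * B := by
    rw [hTc, hD, hB, ← cfc_mul _ _ H hcd hct, ← cfc_mul _ _ H hcb hcb]
    apply cfc_congr
    intro x hx
    have hx1 : (0:ℝ) < x + 1 := hpos1 x hx
    have hs : Real.sqrt (x + 1) * Real.sqrt (x + 1) = x + 1 :=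
      Real.mul_self_sqrt hx1.le
    have hsne : Real.sqrt (x + 1) ≠ 0 := ne_of_gt (Real.sqrt_pos.mpr hx1)
    field_simp
    rw [Real.sq_sqrt hx1.le]; ring
  -- C * B = T
  have hCB : C * B = T := by
    rw [hTc, hC, hB, ← cfc_mul _ _ H hcs hcb]
    apply cfc_congr
    intro x hx
    have hx1 : (0:ℝ) < x + 1 := hpos1 x hx
    have hsne : Real.sqrt (x + 1) ≠ 0 := ne_of_gt (Real.sqrt_pos.mpr hx1)
    field_simp
  -- self-adjointness
  have hRsa : IsSelfAdjoint R := cfc_predicate _ H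
  have hBsa : IsSelfAdjoint B := cfc_predicate _ H
  have hRsym := ContinuousLinearMap.isSelfAdjoint_iff_isSymmetric.mp hRsa
  have hBsym := ContinuousLinearMap.isSelfAdjoint_iff_isSymmetric.mp hBsa
  -- key identity
  have key : ∀ n, (inner ℂ (ψ n) (T (ψ n)) : ℂ) - ((lam : ℂ) + 1) * inner ℂ (R (ψ n)) (T (ψ n))
      = ((‖B (ψ n)‖ : ℂ)) ^ 2 := by
    intro n
    have e1 : (inner ℂ (R (ψ n)) (T (ψ n)) : ℂ) = inner ℂ (ψ n) (R (T (ψ n))) :=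
      hRsym (ψ n) (T (ψ n))
    have e2 : ((lam : ℂ) + 1) * (inner ℂ (ψ n) (R (T (ψ n))) : ℂ)
        = inner ℂ (ψ n) (((lam + 1 : ℝ) • R) (T (ψ n))) := by
      rw [ContinuousLinearMap.smul_apply, ← Complex.coe_smul, inner_smul_right]
      push_cast; ring
    have e3 : (inner ℂ (ψ n) (T (ψ n)) : ℂ) - inner ℂ (ψ n) (((lam + 1 : ℝ) • R) (T (ψ n)))
        = inner ℂ (ψ n) ((D * T) (ψ n)) := by
      rw [← inner_sub_right]
      congr 1
      rw [hDc]
      simp [ContinuousLinearMap.mul_apply, ContinuousLinearMap.sub_apply]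
    rw [e1, e2, e3, hDT]
    have e4 : (inner ℂ (ψ n) ((B * B) (ψ n)) : ℂ) = inner ℂ (B (ψ n)) (B (ψ n)) := by
      rw [ContinuousLinearMap.mul_apply]
      exact (hBsym (ψ n) (B (ψ n))).symm
    rw [e4, inner_self_eq_norm_sq_to_K]
    norm_num
  -- limit: ‖B ψ n‖ → 0
  have hL : Tendsto (fun n => ((‖B (ψ n)‖ : ℂ)) ^ 2) atTop (nhds 0) := by
    have := h2.sub (h1.const_mul ((lam : ℂ) + 1))
    simp only [mul_zero, sub_zero] at this
    have heq : (fun n => (inner ℂ (ψ n) (T (ψ n)) : ℂ)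
        - ((lam : ℂ) + 1) * inner ℂ (R (ψ n)) (T (ψ n)))
        = fun n => ((‖B (ψ n)‖ : ℂ)) ^ 2 := funext key
    rw [← heq]
    exact this
  have hL2 : Tendsto (fun n => ‖B (ψ n)‖ ^ 2) atTop (nhds 0) := by
    have := (Complex.continuous_re.tendsto 0).comp hL
    simpa [Function.comp_def, ← Complex.ofReal_pow] using this
  have hL3 : Tendsto (fun n => ‖B (ψ n)‖) atTop (nhds 0) := by
    have := (Real.continuous_sqrt.tendsto 0).comp hL2
    simpa [Function.comp_def, Real.sqrt_sq (norm_nonneg _)] using this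
  have hB0 : Tendsto (fun n => B (ψ n)) atTop (nhds 0) :=
    tendsto_zero_iff_norm_tendsto_zero.mpr hL3
  have hT0 : Tendsto (fun n => T (ψ n)) atTop (nhds 0) := by
    have := (C.continuous.tendsto 0).comp hB0
    have heq : (fun n => C (B (ψ n))) = fun n => T (ψ n) := by
      ext n
      rw [← hCB]
      simp [ContinuousLinearMap.mul_apply]
    simpa [Function.comp_def, heq, map_zero] using this
  -- conclude
  by_contra hmem
  rw [spectrum.notMem_iff] at hmem
  have hu : IsUnit (-(algebraMap ℂ (ℋ →L[ℂ] ℋ) (lam : ℂ) - H)) := hmem.neg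
  have hTT : T = -(algebraMap ℂ (ℋ →L[ℂ] ℋ) (lam : ℂ) - H) := by
    rw [hT, Algebra.algebraMap_eq_smul_one]; abel
  obtain ⟨u, huu⟩ := hu
  have hinv : (↑u⁻¹ : ℋ →L[ℂ] ℋ) * T = 1 := by
    rw [hTT, ← huu]; exact u.inv_mul
  have hψ0 : Tendsto (fun n => ψ n) atTop (nhds 0) := by
    have := ((↑u⁻¹ : ℋ →L[ℂ] ℋ).continuous.tendsto 0).comp hT0
    have heq : (fun n => (↑u⁻¹ : ℋ →L[ℂ] ℋ) (T (ψ n))) = fun n => ψ n := by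
      ext n
      have : ((↑u⁻¹ : ℋ →L[ℂ] ℋ) * T) (ψ n) = (1 : ℋ →L[ℂ] ℋ) (ψ n) := by rw [hinv]
      simpa [ContinuousLinearMap.mul_apply] using this
    simpa [Function.comp_def, heq, map_zero] using this
  have hnorm : Tendsto (fun n => ‖ψ n‖) atTop (nhds 0) := by
    simpa using hψ0.norm
  have : (1 : ℝ) = 0 := by
    have h1' : Tendsto (fun _ : ℕ => (1:ℝ)) atTop (nhds 0) := by
      simpa only [hψ] using hnorm
    exact tendsto_nhds_unique tendsto_const_nhds h1'
  norm_num at this
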